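/- If {ρ_i}_{i≥1} is a dense sequence in the set of states on a separable Hilbert space H (with respect to the trace norm) and ρ_* = ∑_i c_i ρ_i with c_i > 0, ∑ c_i = 1, then for every POVM A on (Ω, ℬ), every state ρ satisfies P^A_ρ ≪ P^A_{ρ_*}; that is, P^A_{ρ_*} dominates the entire statistical model {P^A_ρ : ρ a state}. -/

import Mathlib

open MeasureTheory
open scoped InnerProductSpace ENNReal

/-- A positive-operator valued measure on outcome space `Ω` over the Hilbert space `H`.
σ-additivity in the weak operator topology is encoded by the family of scalar measures
`E ↦ ⟪x, A(E) x⟫` attached to each vector `x`. -/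
structure POVM (Ω : Type*) [MeasurableSpace Ω] (H : Type*) [NormedAddCommGroup H]
    [InnerProductSpace ℂ H] [CompleteSpace H] where
  toFun : Set Ω → H →L[ℂ] H
  pos : ∀ E, MeasurableSet E → (toFun E).IsPositive
  map_univ : toFun Set.univ = 1
  measure : H → MeasureTheory.Measure Ω
  measure_apply : ∀ (x : H) (E : Set Ω), MeasurableSet E →
    measure x E = ENNReal.ofReal (⟪x, toFun E x⟫_ℂ).re

variable {H : Type*} [NormedAddCommGroup H] [InnerProductSpace ℂ H] [CompleteSpace H]

/-- A state (positive trace-class operator of unit trace), with trace computed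
in the Hilbert basis `b` of the separable Hilbert space `H`. -/
structure QState (b : HilbertBasis ℕ ℂ H) where
  op : H →L[ℂ] H
  pos : op.IsPositive
  tr_one : HasSum (fun i => (⟪b i, op (b i)⟫_ℂ).re) 1

/-- The trace of an operator `T`, computed in the Hilbert basis `b`. -/
noncomputable def trOp (b : HilbertBasis ℕ ℂ H) (T : H →L[ℂ] H) : ℝ :=
  ∑' i, (⟪b i, T (b i)⟫_ℂ).re

/-- The trace-norm distance `‖ρ - σ‖_tr`, via its dual characterization
`sup {|tr((ρ - σ) T)| : ‖T‖ ≤ 1}`. -/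
noncomputable def traceDist (b : HilbertBasis ℕ ℂ H) (ρ σ : H →L[ℂ] H) : ℝ :=
  ⨆ T : {T : H →L[ℂ] H // ‖T‖ ≤ 1}, |trOp b ((ρ - σ) ∘L T.1)|

set_option maxHeartbeats 1000000
set_option synthInstance.maxHeartbeats 400000

private lemma exists_sqrt {H : Type*} [NormedAddCommGroup H] [InnerProductSpace ℂ H]
    [CompleteSpace H] (D : H →L[ℂ] H) (hD : D.IsPositive) :
    ∃ R : H →L[ℂ] H, IsSelfAdjoint R ∧ ∀ x, R (R x) = D x := by
  have h0 : (0 : H →L[ℂ] H) ≤ D := (ContinuousLinearMap.nonneg_iff_isPositive D).mpr hD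
  refine ⟨CFC.sqrt D, IsSelfAdjoint.of_nonneg (CFC.sqrt_nonneg D), fun x => ?_⟩
  conv_rhs => rw [← CFC.sqrt_mul_sqrt_self D h0]
  rfl

section aux
open scoped InnerProductSpace ComplexConjugate
variable {H : Type*} [NormedAddCommGroup H] [InnerProductSpace ℂ H] [CompleteSpace H]

private lemma parseval_sq (b : HilbertBasis ℕ ℂ H) (x : H) :
    HasSum (fun k => ‖⟪b k, x⟫_ℂ‖ ^ 2) (‖x‖ ^ 2) := by
  have h := Complex.hasSum_re (b.hasSum_inner_mul_inner x x)
  have h2 : ∀ k, (⟪x, b k⟫_ℂ * ⟪b k, x⟫_ℂ).re = ‖⟪b k, x⟫_ℂ‖ ^ 2 := by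
    intro k
    rw [← inner_conj_symm x (b k), RCLike.conj_mul]
    norm_cast
  have h3 : (⟪x, x⟫_ℂ).re = ‖x‖ ^ 2 := by
    rw [inner_self_eq_norm_sq_to_K (𝕜 := ℂ) x]; norm_cast
  rw [show (fun k => ‖⟪b k, x⟫_ℂ‖ ^ 2) = fun k => (⟪x, b k⟫_ℂ * ⟪b k, x⟫_ℂ).re from
    funext fun k => (h2 k).symm, ← h3]
  exact h

private lemma sa_inner {R : H →L[ℂ] H} (hR : IsSelfAdjoint R) (x y : H) :
    ⟪R x, y⟫_ℂ = ⟪x, R y⟫_ℂ := by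
  conv_lhs => rw [← hR.adjoint_eq]
  exact ContinuousLinearMap.adjoint_inner_left R y x

private lemma hs_key (b : HilbertBasis ℕ ℂ H) (R T : H →L[ℂ] H) (hR : IsSelfAdjoint R)
    (hsum : Summable fun j => ‖R (b j)‖ ^ 2) :
    ∃ S : ℂ, HasSum (fun j => ⟪b j, R (R (T (b j)))⟫_ℂ) S ∧
      HasSum (fun j => ⟪R (b j), T (R (b j))⟫_ℂ) S := by
  set F : ℕ × ℕ → ℂ := fun p => ⟪R (b p.1), b p.2⟫_ℂ * ⟪R (b p.2), T (b p.1)⟫_ℂ with hF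
  -- summability of first factors squared
  have hu : Summable fun p : ℕ × ℕ => ‖⟪R (b p.1), b p.2⟫_ℂ‖ ^ 2 := by
    refine (summable_prod_of_nonneg (fun p => by positivity)).mpr ⟨fun j => ?_, ?_⟩
    · exact (parseval_sq b (R (b j))).summable.congr fun k => by rw [norm_inner_symm]
    · apply hsum.congr
      intro j
      have := (parseval_sq b (R (b j))).tsum_eq
      rw [← this]
      exact tsum_congr fun k => by rw [norm_inner_symm]
  -- summability of second factors squared
  have hW : Summable fun p : ℕ × ℕ => ‖⟪R (b p.1), T (b p.2)⟫_ℂ‖ ^ 2 := by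
    refine (summable_prod_of_nonneg (fun p => by positivity)).mpr ⟨fun k => ?_, ?_⟩
    · apply (parseval_sq b ((ContinuousLinearMap.adjoint T) (R (b k)))).summable.congr
      intro j
      rw [ContinuousLinearMap.adjoint_inner_right, norm_inner_symm]
    · have hb : ∀ k, ∑' j, ‖⟪R (b k), T (b j)⟫_ℂ‖ ^ 2
          ≤ ‖T‖ ^ 2 * ‖R (b k)‖ ^ 2 := by
        intro k
        have h1 : ∑' j, ‖⟪R (b k), T (b j)⟫_ℂ‖ ^ 2
            = ‖(ContinuousLinearMap.adjoint T) (R (b k))‖ ^ 2 := by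
          rw [← (parseval_sq b ((ContinuousLinearMap.adjoint T) (R (b k)))).tsum_eq]
          exact tsum_congr fun j => by
            rw [norm_inner_symm, ContinuousLinearMap.adjoint_inner_right]
        rw [h1]
        have h2 : ‖(ContinuousLinearMap.adjoint T) (R (b k))‖ ≤ ‖T‖ * ‖R (b k)‖ := by
          calc ‖(ContinuousLinearMap.adjoint T) (R (b k))‖
              ≤ ‖ContinuousLinearMap.adjoint T‖ * ‖R (b k)‖ :=
                (ContinuousLinearMap.adjoint T).le_opNorm _
            _ = ‖T‖ * ‖R (b k)‖ := by
                rw [ContinuousLinearMap.adjoint.norm_map]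
        calc ‖(ContinuousLinearMap.adjoint T) (R (b k))‖ ^ 2
            ≤ (‖T‖ * ‖R (b k)‖) ^ 2 := by
              apply pow_le_pow_left₀ (norm_nonneg _) h2
          _ = ‖T‖ ^ 2 * ‖R (b k)‖ ^ 2 := by ring
      exact (hsum.mul_left (‖T‖ ^ 2)).of_nonneg_of_le
        (fun k => tsum_nonneg fun j => by positivity) hb
  have hv : Summable fun p : ℕ × ℕ => ‖⟪R (b p.2), T (b p.1)⟫_ℂ‖ ^ 2 :=
    (Equiv.prodComm ℕ ℕ).summable_iff.mpr hW
  -- summability of F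
  have hFs : Summable F := by
    apply Summable.of_norm
    refine Summable.of_nonneg_of_le (fun p => norm_nonneg _) (fun p => ?_)
      (((hu.add hv).div_const 2))
    rw [hF]
    simp only [norm_mul]
    have := two_mul_le_add_sq ‖⟪R (b p.1), b p.2⟫_ℂ‖ ‖⟪R (b p.2), T (b p.1)⟫_ℂ‖
    set a := ‖⟪R (b p.1), b p.2⟫_ℂ‖
    set c := ‖⟪R (b p.2), T (b p.1)⟫_ℂ‖
    nlinarith [norm_nonneg (⟪R (b p.1), b p.2⟫_ℂ), norm_nonneg (⟪R (b p.2), T (b p.1)⟫_ℂ)]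
  obtain ⟨S, hS⟩ := hFs
  -- row sums
  have row1 : ∀ j, HasSum (fun k => F (j, k)) ⟪b j, R (R (T (b j)))⟫_ℂ := by
    intro j
    have h := b.hasSum_inner_mul_inner (R (b j)) (R (T (b j)))
    have he : ∀ k, ⟪R (b j), b k⟫_ℂ * ⟪b k, R (T (b j))⟫_ℂ = F (j, k) := by
      intro k
      rw [hF]
      simp only []
      rw [sa_inner hR (b k) (T (b j))]
    rw [sa_inner hR (b j) (R (T (b j)))] at h
    exact h.congr_fun fun k => (he k).symm
  have row2 : ∀ j, HasSum (fun k => F (k, j)) ⟪R (b j), T (R (b j))⟫_ℂ := by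
    intro j
    have h := b.hasSum_inner_mul_inner ((ContinuousLinearMap.adjoint T) (R (b j))) (R (b j))
    have he : ∀ k, ⟪(ContinuousLinearMap.adjoint T) (R (b j)), b k⟫_ℂ * ⟪b k, R (b j)⟫_ℂ
        = F (k, j) := by
      intro k
      rw [hF]
      simp only []
      rw [ContinuousLinearMap.adjoint_inner_left, ← sa_inner hR (b k) (b j)]
      ring
    rw [ContinuousLinearMap.adjoint_inner_left] at h
    exact h.congr_fun fun k => (he k).symm
  refine ⟨S, hS.prod_fiberwise row1, ?_⟩
  have hS2 : HasSum (fun p : ℕ × ℕ => F (p.2, p.1)) S :=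
    (Equiv.prodComm ℕ ℕ).hasSum_iff.mpr hS
  exact hS2.prod_fiberwise row2

/-- The main trace lemma. -/
private lemma trace_key (b : HilbertBasis ℕ ℂ H) (D T : H →L[ℂ] H) (hD : D.IsPositive)
    (hsum : Summable fun j => (⟪b j, D (b j)⟫_ℂ).re) :
    Summable (fun j => ⟪b j, D (T (b j))⟫_ℂ) ∧
    ‖∑' j, ⟪b j, D (T (b j))⟫_ℂ‖ ≤ (∑' j, (⟪b j, D (b j)⟫_ℂ).re) * ‖T‖ ∧
    ((∀ x, 0 ≤ (⟪x, T x⟫_ℂ).re) → 0 ≤ (∑' j, ⟪b j, D (T (b j))⟫_ℂ).re) := by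
  obtain ⟨R, hRsa, hRD⟩ := exists_sqrt D hD
  have hdiag : ∀ x, ‖R x‖ ^ 2 = (⟪x, D x⟫_ℂ).re := by
    intro x
    rw [← hRD x, ← sa_inner hRsa x (R x)]
    rw [inner_self_eq_norm_sq_to_K (𝕜 := ℂ) (R x)]
    norm_cast
  have hRsum : Summable fun j => ‖R (b j)‖ ^ 2 := hsum.congr fun j => (hdiag (b j)).symm
  obtain ⟨S, h1, h2⟩ := hs_key b R T hRsa hRsum
  have hDser : (fun j => ⟪b j, D (T (b j))⟫_ℂ) = fun j => ⟪b j, R (R (T (b j)))⟫_ℂ := by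
    funext j; rw [hRD]
  have h1' : HasSum (fun j => ⟪b j, D (T (b j))⟫_ℂ) S := by rw [hDser]; exact h1
  refine ⟨h1'.summable, ?_, ?_⟩
  · rw [h1'.tsum_eq, ← h2.tsum_eq]
    have hbound : ∀ j, ‖⟪R (b j), T (R (b j))⟫_ℂ‖ ≤ ‖T‖ * ‖R (b j)‖ ^ 2 := by
      intro j
      calc ‖⟪R (b j), T (R (b j))⟫_ℂ‖ ≤ ‖R (b j)‖ * ‖T (R (b j))‖ := norm_inner_le_norm _ _
        _ ≤ ‖R (b j)‖ * (‖T‖ * ‖R (b j)‖) := by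
            apply mul_le_mul_of_nonneg_left (T.le_opNorm _) (norm_nonneg _)
        _ = ‖T‖ * ‖R (b j)‖ ^ 2 := by ring
    have hg : HasSum (fun j => ‖T‖ * ‖R (b j)‖ ^ 2)
        ((∑' j, (⟪b j, D (b j)⟫_ℂ).re) * ‖T‖) := by
      have h := hRsum.hasSum.mul_left ‖T‖
      have he : ∑' j, ‖R (b j)‖ ^ 2 = ∑' j, (⟪b j, D (b j)⟫_ℂ).re :=
        tsum_congr fun j => hdiag (b j)
      rw [he, mul_comm] at h
      exact h
    exact tsum_of_norm_bounded hg hbound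
  · intro hT
    rw [h1'.tsum_eq, ← h2.tsum_eq]
    rw [Complex.re_tsum h2.summable]
    exact tsum_nonneg fun j => hT (R (b j))
end aux

/-- If `{ρᵢ}` is trace-norm dense in the states and `ρ_* = ∑ᵢ cᵢ ρᵢ`
with `cᵢ > 0`, `∑ cᵢ = 1`, then for every POVM `A` and every state `σ`,
`P^A_σ ≪ P^A_{ρ_*}`. -/
theorem stmt4 {Ω : Type*} [MeasurableSpace Ω] (b : HilbertBasis ℕ ℂ H) (A : POVM Ω H)
    (ρ : ℕ → QState b) (c : ℕ → ℝ) (hc : ∀ i, 0 < c i) (hc1 : HasSum c 1)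
    (hdense : ∀ (σ : QState b) (ε : ℝ), 0 < ε → ∃ i, traceDist b σ.op (ρ i).op < ε)
    (ρs : QState b) (hρs : ∀ x : H, HasSum (fun i => (c i : ℂ) • (ρ i).op x) (ρs.op x))
    (P : QState b → Measure Ω)
    (hP : ∀ (σ : QState b) E, MeasurableSet E → (P σ E).toReal = trOp b (σ.op ∘L A.toFun E))
    (hPp : ∀ σ, IsProbabilityMeasure (P σ))
    (Ps : Measure Ω)
    (hPs : ∀ E, MeasurableSet E → (Ps E).toReal = trOp b (ρs.op ∘L A.toFun E))
    (hPsp : IsProbabilityMeasure Ps) :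
    ∀ σ : QState b, P σ ≪ Ps := by
  have hself : (⟪·, ·⟫_ℂ) = fun (x y : H) => ⟪x, y⟫_ℂ := rfl
  -- re of inner for states is nonneg
  have hstate_nn : ∀ (τ : QState b) (x : H), 0 ≤ (⟪x, τ.op x⟫_ℂ).re := by
    intro τ x
    simpa using τ.pos.re_inner_nonneg_right x
  -- trOp in terms of series
  have htr : ∀ (X T' : H →L[ℂ] H), trOp b (X ∘L T') = ∑' j, (⟪b j, X (T' (b j))⟫_ℂ).re :=
    fun X T' => rfl
  intro σ
  refine Measure.AbsolutelyContinuous.mk fun E hE h0 => ?_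
  set T := A.toFun E with hTdef
  -- form bounds for T
  have hTpos : ∀ x : H, 0 ≤ (⟪x, T x⟫_ℂ).re := by
    intro x
    simpa using (A.pos E hE).re_inner_nonneg_right x
  have hTle : ∀ x : H, (⟪x, T x⟫_ℂ).re ≤ ‖x‖ ^ 2 := by
    intro x
    have hmono : A.measure x E ≤ A.measure x Set.univ :=
      measure_mono (Set.subset_univ E)
    rw [A.measure_apply x E hE, A.measure_apply x Set.univ MeasurableSet.univ,
      A.map_univ] at hmono
    have h1 : (⟪x, (1 : H →L[ℂ] H) x⟫_ℂ).re = ‖x‖ ^ 2 := by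
      rw [ContinuousLinearMap.one_apply, inner_self_eq_norm_sq_to_K (𝕜 := ℂ) x]
      norm_cast
    rw [h1] at hmono
    exact le_trans ((ENNReal.ofReal_le_ofReal_iff (by positivity)).mp hmono) le_rfl
  have hTnorm : ‖T‖ ≤ 1 := by
    have hT0 : (0 : H →L[ℂ] H) ≤ T :=
      (ContinuousLinearMap.nonneg_iff_isPositive T).mpr (A.pos E hE)
    have hT1 : T ≤ 1 := by
      rw [ContinuousLinearMap.le_def, ContinuousLinearMap.isPositive_def']
      refine ⟨(IsSelfAdjoint.one (R := H →L[ℂ] H)).sub (A.pos E hE).isSelfAdjoint, fun x => ?_⟩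
      have h2 := hTle x
      have h3 : (1 - T).reApplyInnerSelf x = ‖x‖ ^ 2 - (⟪x, T x⟫_ℂ).re := by
        have h4 : (⟪(1 - T) x, x⟫_ℂ).re = ‖x‖ ^ 2 - (⟪T x, x⟫_ℂ).re := by
          rw [ContinuousLinearMap.sub_apply, inner_sub_left, Complex.sub_re,
            ContinuousLinearMap.one_apply, inner_self_eq_norm_sq_to_K (𝕜 := ℂ) x]
          norm_cast
        have h5 : (⟪T x, x⟫_ℂ).re = (⟪x, T x⟫_ℂ).re := by
          simpa using (inner_re_symm (𝕜 := ℂ) x (T x)).symm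
        show (⟪(1 - T) x, x⟫_ℂ).re = _
        rw [h4, h5]
      rw [h3]
      linarith
    exact (CStarAlgebra.norm_le_one_iff_of_nonneg T hT0).mpr hT1
  -- Step 1: the reference measure vanishes
  have hs0 : trOp b (ρs.op ∘L T) = 0 := by
    rw [← hPs E hE, h0]
    simp
  -- Step 2: each P (ρ k) E = 0
  have hstep2 : ∀ k, trOp b ((ρ k).op ∘L T) = 0 := by
    intro k
    set D := ρs.op - (c k : ℂ) • (ρ k).op with hDdef
    have hform : ∀ x : H, c k * (⟪x, (ρ k).op x⟫_ℂ).re ≤ (⟪x, ρs.op x⟫_ℂ).re := by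
      intro x
      have h := (hρs x).mapL (innerSL ℂ x)
      have h' : HasSum (fun i => c i * (⟪x, (ρ i).op x⟫_ℂ).re) (⟪x, ρs.op x⟫_ℂ).re := by
        have h2 := Complex.hasSum_re h
        apply h2.congr_fun
        intro i
        simp [inner_smul_right, Complex.mul_re]
      exact le_hasSum h' k fun i _ => mul_nonneg (hc i).le (hstate_nn (ρ i) x)
    have hDpos : D.IsPositive := by
      constructor
      · have hcsa : IsSelfAdjoint ((c k : ℂ)) := by
          simp [IsSelfAdjoint, Complex.star_def, Complex.conj_ofReal]
        exact ContinuousLinearMap.isSelfAdjoint_iff_isSymmetric.mp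
          (ρs.pos.isSelfAdjoint.sub (hcsa.smul (ρ k).pos.isSelfAdjoint))
      · intro x
        have h1 := hform x
        have h2 : (⟪D x, x⟫_ℂ).re = (⟪x, D x⟫_ℂ).re := by
          simpa using (inner_re_symm (𝕜 := ℂ) x (D x)).symm
        have h3 : (⟪x, D x⟫_ℂ).re
            = (⟪x, ρs.op x⟫_ℂ).re - c k * (⟪x, (ρ k).op x⟫_ℂ).re := by
          rw [hDdef]
          rw [ContinuousLinearMap.sub_apply, ContinuousLinearMap.smul_apply,
            inner_sub_right, inner_smul_right]
          simp [Complex.sub_re, Complex.mul_re]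
        have h4 : D.reApplyInnerSelf x = (⟪D x, x⟫_ℂ).re := rfl
        rw [h4, h2, h3]
        linarith
    have hDsum : Summable fun j => (⟪b j, D (b j)⟫_ℂ).re := by
      have he : (fun j => (⟪b j, D (b j)⟫_ℂ).re)
          = fun j => (⟪b j, ρs.op (b j)⟫_ℂ).re - c k * (⟪b j, (ρ k).op (b j)⟫_ℂ).re := by
        funext j
        rw [hDdef]
        rw [ContinuousLinearMap.sub_apply, ContinuousLinearMap.smul_apply,
          inner_sub_right, inner_smul_right]
        simp [Complex.sub_re, Complex.mul_re]
      rw [he]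
      exact ρs.tr_one.summable.sub (((ρ k).tr_one.summable).mul_left (c k))
    obtain ⟨hsumD, _, hposD⟩ := trace_key b D T hDpos hDsum
    obtain ⟨hsumk, _, hposk⟩ := trace_key b (ρ k).op T (ρ k).pos (ρ k).tr_one.summable
    have hsplit : ∀ j, ⟪b j, ρs.op (T (b j))⟫_ℂ
        = (c k : ℂ) * ⟪b j, (ρ k).op (T (b j))⟫_ℂ + ⟪b j, D (T (b j))⟫_ℂ := by
      intro j
      rw [hDdef]
      rw [ContinuousLinearMap.sub_apply, ContinuousLinearMap.smul_apply,
        inner_sub_right, inner_smul_right]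
      ring
    have hsums : Summable fun j => ⟪b j, ρs.op (T (b j))⟫_ℂ := by
      apply Summable.congr ((hsumk.mul_left ((c k : ℂ))).add hsumD)
      intro j
      exact (hsplit j).symm
    have htsum : (∑' j, ⟪b j, ρs.op (T (b j))⟫_ℂ)
        = (c k : ℂ) * (∑' j, ⟪b j, (ρ k).op (T (b j))⟫_ℂ)
          + ∑' j, ⟪b j, D (T (b j))⟫_ℂ := by
      rw [tsum_congr hsplit, Summable.tsum_add (hsumk.mul_left _) hsumD, tsum_mul_left]
    have hres : trOp b (ρs.op ∘L T) = (∑' j, ⟪b j, ρs.op (T (b j))⟫_ℂ).re := by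
      rw [htr, Complex.re_tsum hsums]
    have hresk : trOp b ((ρ k).op ∘L T) = (∑' j, ⟪b j, (ρ k).op (T (b j))⟫_ℂ).re := by
      rw [htr, Complex.re_tsum hsumk]
    have hre : (0 : ℝ) = c k * (∑' j, ⟪b j, (ρ k).op (T (b j))⟫_ℂ).re
        + (∑' j, ⟪b j, D (T (b j))⟫_ℂ).re := by
      have := congrArg Complex.re htsum
      rw [← hres, hs0] at this
      simpa [Complex.add_re, Complex.mul_re] using this
    have hk := hposk hTpos
    have hD := hposD hTpos
    have hck := hc k
    rw [hresk]
    nlinarith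
  -- Step 3: the general state
  have hσval : ∀ (τ : QState b) (T' : H →L[ℂ] H),
      Summable (fun j => ⟪b j, τ.op (T' (b j))⟫_ℂ) ∧
      trOp b (τ.op ∘L T') = (∑' j, ⟪b j, τ.op (T' (b j))⟫_ℂ).re ∧
      ‖∑' j, ⟪b j, τ.op (T' (b j))⟫_ℂ‖ ≤ ‖T'‖ := by
    intro τ T'
    obtain ⟨h1, h2, _⟩ := trace_key b τ.op T' τ.pos τ.tr_one.summable
    refine ⟨h1, by rw [htr, Complex.re_tsum h1], ?_⟩
    have h3 : (∑' j, (⟪b j, τ.op (b j)⟫_ℂ).re) = 1 := τ.tr_one.tsum_eq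
    rw [h3, one_mul] at h2
    exact h2
  have hdiffgen : ∀ (T' : H →L[ℂ] H) (i : ℕ),
      trOp b ((σ.op - (ρ i).op) ∘L T')
        = trOp b (σ.op ∘L T') - trOp b ((ρ i).op ∘L T') := by
    intro T' i
    obtain ⟨hs1, hv1, _⟩ := hσval σ T'
    obtain ⟨hs2, hv2, _⟩ := hσval (ρ i) T'
    have he : ∀ j, (⟪b j, (σ.op - (ρ i).op) (T' (b j))⟫_ℂ).re
        = (⟪b j, σ.op (T' (b j))⟫_ℂ).re - (⟪b j, (ρ i).op (T' (b j))⟫_ℂ).re := by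
      intro j
      simp [ContinuousLinearMap.sub_apply, inner_sub_right, Complex.sub_re]
    rw [htr, tsum_congr he,
      Summable.tsum_sub ((Complex.hasSum_re hs1.hasSum).summable) ((Complex.hasSum_re hs2.hasSum).summable),
      hv1, hv2, ← Complex.re_tsum hs1, ← Complex.re_tsum hs2]
  have hσnn : 0 ≤ trOp b (σ.op ∘L T) := by
    rw [← hP σ E hE]
    exact ENNReal.toReal_nonneg
  have hσlt : ∀ ε : ℝ, 0 < ε → trOp b (σ.op ∘L T) < ε := by
    intro ε hε
    obtain ⟨i, hi⟩ := hdense σ ε hε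
    have hBdd : BddAbove (Set.range fun T' : {T' : H →L[ℂ] H // ‖T'‖ ≤ 1} =>
        |trOp b ((σ.op - (ρ i).op) ∘L T'.1)|) := by
      refine ⟨2, ?_⟩
      rintro x ⟨T', rfl⟩
      show |trOp b ((σ.op - (ρ i).op) ∘L T'.1)| ≤ (2:ℝ)
      obtain ⟨hs1, hv1, hb1⟩ := hσval σ T'.1
      obtain ⟨hs2, hv2, hb2⟩ := hσval (ρ i) T'.1
      rw [hdiffgen T'.1 i, hv1, hv2]
      have h1 : |(∑' j, ⟪b j, σ.op (T'.1 (b j))⟫_ℂ).re| ≤ 1 :=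
        le_trans (Complex.abs_re_le_norm _) (le_trans hb1 T'.2)
      have h2 : |(∑' j, ⟪b j, (ρ i).op (T'.1 (b j))⟫_ℂ).re| ≤ 1 :=
        le_trans (Complex.abs_re_le_norm _) (le_trans hb2 T'.2)
      calc |(∑' j, ⟪b j, σ.op (T'.1 (b j))⟫_ℂ).re
          - (∑' j, ⟪b j, (ρ i).op (T'.1 (b j))⟫_ℂ).re| ≤ _ + _ := abs_sub _ _
        _ ≤ 2 := by linarith
    have hmem : |trOp b ((σ.op - (ρ i).op) ∘L T)| ≤ traceDist b σ.op (ρ i).op :=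
      le_ciSup hBdd (⟨T, hTnorm⟩ : {T' : H →L[ℂ] H // ‖T'‖ ≤ 1})
    have hval : trOp b ((σ.op - (ρ i).op) ∘L T) = trOp b (σ.op ∘L T) := by
      rw [hdiffgen T i, hstep2 i, sub_zero]
    calc trOp b (σ.op ∘L T) ≤ |trOp b ((σ.op - (ρ i).op) ∘L T)| := by
          rw [hval]; exact le_abs_self _
      _ ≤ traceDist b σ.op (ρ i).op := hmem
      _ < ε := hi
  have hσ0 : trOp b (σ.op ∘L T) = 0 := by
    by_contra hne
    have hpos : 0 < trOp b (σ.op ∘L T) := lt_of_le_of_ne hσnn (Ne.symm hne)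
    exact absurd (hσlt _ hpos) (lt_irrefl _)
  have hfin : P σ E ≠ ⊤ := measure_ne_top _ _
  have := hP σ E hE
  rw [hσ0] at this
  rcases (ENNReal.toReal_eq_zero_iff _).mp this with h | h
  · exact h
  · exact absurd h hfin
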